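/- arXiv:1905.04895 — 2 statements merged into one kernel-verified Lean document; each statement's English description precedes it below -/
import Mathlib

section
/- For the orthogonal group acting on the sphere of states, the Haar average of (Ov)(Ov)ᵀ over O equals (1/|u|²)((1/(ℓ-1)) I_ℓ + ((ℓ-2)/(ℓ-1)) û ûᵀ), where v is any vector on the boundary sphere of the state space {w : u·w = 1, |w - u/|u|²| = r} with appropriate radius r, and O ranges over orthogonal maps fixing u. -/
open Matrix MeasureTheory

instance (n m : ℕ) : MeasurableSpace (Matrix (Fin n) (Fin m) ℝ) :=
  MeasurableSpace.pi

section MatAlg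
variable {ℓ : ℕ}

lemma my_vecMulVec_mulVec (a b w : Fin ℓ → ℝ) :
    (vecMulVec a b) *ᵥ w = (b ⬝ᵥ w) • a := by
  funext i
  simp [vecMulVec_apply, mulVec, dotProduct, Finset.sum_mul, Finset.mul_sum,
    mul_comm, mul_left_comm, mul_assoc]

lemma my_mul_vecMulVec (a b c d : Fin ℓ → ℝ) :
    vecMulVec a b * vecMulVec c d = (b ⬝ᵥ c) • vecMulVec a d := by
  ext i j
  simp only [mul_apply, vecMulVec_apply, Matrix.smul_apply, smul_eq_mul, dotProduct, Finset.sum_mul]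
  exact Finset.sum_congr rfl fun k _ => by ring

lemma my_star_eq (A : Matrix (Fin ℓ) (Fin ℓ) ℝ) : star A = Aᵀ := by
  ext i j; simp [Matrix.star_apply]

noncomputable def reflM (z : Fin ℓ → ℝ) : Matrix (Fin ℓ) (Fin ℓ) ℝ :=
  1 - (2 / (z ⬝ᵥ z)) • vecMulVec z z

lemma reflM_mulVec (z w : Fin ℓ → ℝ) :
    reflM z *ᵥ w = w - (2 / (z ⬝ᵥ z)) • ((z ⬝ᵥ w) • z) := by
  simp [reflM, sub_mulVec, smul_mulVec, my_vecMulVec_mulVec]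

lemma reflM_mem (z : Fin ℓ → ℝ) (hz : z ⬝ᵥ z ≠ 0) :
    reflM z ∈ Matrix.orthogonalGroup (Fin ℓ) ℝ := by
  rw [Matrix.mem_orthogonalGroup_iff]
  have hstar : star (reflM z) = reflM z := by
    rw [my_star_eq]
    ext i j
    simp [reflM, vecMulVec_apply, transpose_apply, mul_comm, one_apply, eq_comm]
  rw [← my_star_eq, hstar]
  have key : ((2 / (z ⬝ᵥ z)) • vecMulVec z z) * ((2 / (z ⬝ᵥ z)) • vecMulVec z z)
      = (2 / (z ⬝ᵥ z)) • vecMulVec z z + (2 / (z ⬝ᵥ z)) • vecMulVec z z := by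
    rw [Matrix.smul_mul, Matrix.mul_smul, my_mul_vecMulVec, smul_smul, smul_smul, ← add_smul]
    congr 1
    field_simp
    ring
  rw [reflM, Matrix.sub_mul, Matrix.one_mul, Matrix.mul_sub, Matrix.mul_one, key]
  abel

lemma reflM_fix (z w : Fin ℓ → ℝ) (hzw : z ⬝ᵥ w = 0) : reflM z *ᵥ w = w := by
  rw [reflM_mulVec, hzw]; simp

lemma reflM_neg (z : Fin ℓ → ℝ) (hz : z ⬝ᵥ z ≠ 0) : reflM z *ᵥ z = -z := by
  rw [reflM_mulVec, smul_smul]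
  rw [div_mul_cancel₀ _ hz]
  funext i; simp; ring

lemma transpose_mem {W : Matrix (Fin ℓ) (Fin ℓ) ℝ}
    (hW : W ∈ Matrix.orthogonalGroup (Fin ℓ) ℝ) :
    Wᵀ ∈ Matrix.orthogonalGroup (Fin ℓ) ℝ := by
  rw [Matrix.mem_orthogonalGroup_iff, transpose_transpose]
  have := (Matrix.mem_orthogonalGroup_iff' _ _).mp hW
  exact this

lemma transpose_mul_self {W : Matrix (Fin ℓ) (Fin ℓ) ℝ}
    (hW : W ∈ Matrix.orthogonalGroup (Fin ℓ) ℝ) : Wᵀ * W = 1 := by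
  have := (Matrix.mem_orthogonalGroup_iff' _ _).mp hW
  exact this

lemma transpose_fix {W : Matrix (Fin ℓ) (Fin ℓ) ℝ} {u : Fin ℓ → ℝ}
    (hW : W ∈ Matrix.orthogonalGroup (Fin ℓ) ℝ) (hWu : W *ᵥ u = u) :
    Wᵀ *ᵥ u = u := by
  conv_lhs => rw [← hWu]
  rw [mulVec_mulVec, transpose_mul_self hW, one_mulVec]

end MatAlg

section Meas
variable {ℓ : ℕ}

lemma meas_dot (v x : Fin ℓ → ℝ) :
    Measurable fun O : Matrix (Fin ℓ) (Fin ℓ) ℝ => x ⬝ᵥ O *ᵥ v := by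
  simp only [dotProduct, mulVec]
  refine Finset.measurable_sum _ fun i _ => ?_
  refine measurable_const.mul (Finset.measurable_sum _ fun j _ => ?_)
  exact Measurable.mul ((measurable_pi_apply j).comp (measurable_pi_apply i)) measurable_const

lemma meas_f (v x y : Fin ℓ → ℝ) :
    Measurable fun O : Matrix (Fin ℓ) (Fin ℓ) ℝ => (x ⬝ᵥ O *ᵥ v) * (y ⬝ᵥ O *ᵥ v) :=
  (meas_dot v x).mul (meas_dot v y)

lemma meas_mulLeft (W : Matrix (Fin ℓ) (Fin ℓ) ℝ) :
    Measurable fun O : Matrix (Fin ℓ) (Fin ℓ) ℝ => W * O := by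
  refine measurable_pi_lambda _ fun i => measurable_pi_lambda _ fun j => ?_
  simp only [Matrix.mul_apply]
  exact Finset.measurable_sum _ fun k _ => measurable_const.mul
    ((measurable_pi_apply j).comp (measurable_pi_apply k))

lemma cs_bound (x w : Fin ℓ → ℝ) : (x ⬝ᵥ w) ^ 2 ≤ (x ⬝ᵥ x) * (w ⬝ᵥ w) := by
  have := Finset.sum_mul_sq_le_sq_mul_sq Finset.univ x w
  simpa [dotProduct, pow_two] using this

end Meas

section Main
variable {ℓ : ℕ} (μ : Measure (Matrix (Fin ℓ) (Fin ℓ) ℝ)) (v : Fin ℓ → ℝ)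

/-- The bilinear average. -/
noncomputable def Bf (x y : Fin ℓ → ℝ) : ℝ :=
  ∫ O, (x ⬝ᵥ O *ᵥ v) * (y ⬝ᵥ O *ᵥ v) ∂μ

variable {u : Fin ℓ → ℝ}
variable (hsupp : μ {O | ¬ (O ∈ Matrix.orthogonalGroup (Fin ℓ) ℝ ∧ O.mulVec u = u)} = 0)

include hsupp in
lemma ae_props :
    ∀ᵐ O ∂μ, O ∈ Matrix.orthogonalGroup (Fin ℓ) ℝ ∧ O *ᵥ u = u :=
  ae_iff.mpr hsupp

include hsupp in
lemma ae_norm :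
    ∀ᵐ O ∂μ, (O *ᵥ v) ⬝ᵥ (O *ᵥ v) = v ⬝ᵥ v := by
  filter_upwards [ae_props μ hsupp] with O hO
  rw [dotProduct_mulVec, ← mulVec_transpose, mulVec_mulVec, transpose_mul_self hO.1,
    one_mulVec]

include hsupp in
lemma ae_dot_u :
    ∀ᵐ O ∂μ, u ⬝ᵥ (O *ᵥ v) = u ⬝ᵥ v := by
  filter_upwards [ae_props μ hsupp] with O hO
  rw [dotProduct_mulVec, ← mulVec_transpose, transpose_fix hO.1 hO.2]

variable [IsProbabilityMeasure μ]

include hsupp in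
lemma integrable_f (x y : Fin ℓ → ℝ) :
    Integrable (fun O : Matrix (Fin ℓ) (Fin ℓ) ℝ =>
      (x ⬝ᵥ O *ᵥ v) * (y ⬝ᵥ O *ᵥ v)) μ := by
  refine Integrable.mono' (integrable_const
    (Real.sqrt ((x ⬝ᵥ x) * (v ⬝ᵥ v)) * Real.sqrt ((y ⬝ᵥ y) * (v ⬝ᵥ v))))
    (meas_f v x y).aestronglyMeasurable ?_
  filter_upwards [ae_norm μ (v := v) hsupp] with O hO
  rw [Real.norm_eq_abs, abs_mul]
  have h1 : |x ⬝ᵥ O *ᵥ v| ≤ Real.sqrt ((x ⬝ᵥ x) * (v ⬝ᵥ v)) := by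
    refine Real.abs_le_sqrt ?_
    calc (x ⬝ᵥ O *ᵥ v) ^ 2 ≤ (x ⬝ᵥ x) * ((O *ᵥ v) ⬝ᵥ (O *ᵥ v)) := cs_bound _ _
    _ = (x ⬝ᵥ x) * (v ⬝ᵥ v) := by rw [hO]
  have h2 : |y ⬝ᵥ O *ᵥ v| ≤ Real.sqrt ((y ⬝ᵥ y) * (v ⬝ᵥ v)) := by
    refine Real.abs_le_sqrt ?_
    calc (y ⬝ᵥ O *ᵥ v) ^ 2 ≤ (y ⬝ᵥ y) * ((O *ᵥ v) ⬝ᵥ (O *ᵥ v)) := cs_bound _ _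
    _ = (y ⬝ᵥ y) * (v ⬝ᵥ v) := by rw [hO]
  exact mul_le_mul h1 h2 (abs_nonneg _) (Real.sqrt_nonneg _)

variable (hinv : ∀ O₀ ∈ Matrix.orthogonalGroup (Fin ℓ) ℝ, O₀.mulVec u = u →
      Measure.map (fun O => O₀ * O) μ = μ)

include hinv in
lemma Bf_invariant {W : Matrix (Fin ℓ) (Fin ℓ) ℝ}
    (hW : W ∈ Matrix.orthogonalGroup (Fin ℓ) ℝ) (hWu : W *ᵥ u = u)
    (x y : Fin ℓ → ℝ) :
    Bf μ v (W *ᵥ x) (W *ᵥ y) = Bf μ v x y := by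
  have hmem : Wᵀ ∈ Matrix.orthogonalGroup (Fin ℓ) ℝ := transpose_mem hW
  have hfix : Wᵀ *ᵥ u = u := transpose_fix hW hWu
  have hmap := hinv Wᵀ hmem hfix
  unfold Bf
  conv_rhs => rw [← hmap]
  rw [integral_map (meas_mulLeft Wᵀ).aemeasurable
    (meas_f v x y).aestronglyMeasurable]
  have h : ∀ (a : Fin ℓ → ℝ) (O : Matrix (Fin ℓ) (Fin ℓ) ℝ),
      a ⬝ᵥ (Wᵀ * O) *ᵥ v = (W *ᵥ a) ⬝ᵥ O *ᵥ v := fun a O => by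
    rw [← mulVec_mulVec, dotProduct_mulVec, vecMul_transpose]
  refine integral_congr_ae (Filter.Eventually.of_forall fun O => ?_)
  simp only [h]

omit [IsProbabilityMeasure μ] in
lemma Bf_comm (x y : Fin ℓ → ℝ) : Bf μ v x y = Bf μ v y x := by
  unfold Bf; congr 1; funext O; ring

include hsupp in
lemma Bf_add_left (x x' y : Fin ℓ → ℝ) :
    Bf μ v (x + x') y = Bf μ v x y + Bf μ v x' y := by
  unfold Bf
  rw [← integral_add (integrable_f μ v hsupp x y) (integrable_f μ v hsupp x' y)]
  congr 1; funext O
  rw [add_dotProduct]; ring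

omit [IsProbabilityMeasure μ] in
lemma Bf_smul_left (a : ℝ) (x y : Fin ℓ → ℝ) :
    Bf μ v (a • x) y = a * Bf μ v x y := by
  unfold Bf
  rw [← integral_const_mul]
  congr 1; funext O
  rw [smul_dotProduct]; simp; ring

omit [IsProbabilityMeasure μ] in
lemma Bf_neg_left (x y : Fin ℓ → ℝ) : Bf μ v (-x) y = - Bf μ v x y := by
  have : (-x) = (-1 : ℝ) • x := by funext i; simp
  rw [this, Bf_smul_left μ v]; ring

omit [IsProbabilityMeasure μ] in
lemma Bf_zero_left (y : Fin ℓ → ℝ) : Bf μ v 0 y = 0 := by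
  unfold Bf; simp

end Main

section Claims
variable {ℓ : ℕ} (μ : Measure (Matrix (Fin ℓ) (Fin ℓ) ℝ)) (v : Fin ℓ → ℝ)
variable {u : Fin ℓ → ℝ}
variable (hsupp : μ {O | ¬ (O ∈ Matrix.orthogonalGroup (Fin ℓ) ℝ ∧ O.mulVec u = u)} = 0)
variable [IsProbabilityMeasure μ]
variable (hinv : ∀ O₀ ∈ Matrix.orthogonalGroup (Fin ℓ) ℝ, O₀.mulVec u = u →
      Measure.map (fun O => O₀ * O) μ = μ)

lemma dot_self_nonneg (x : Fin ℓ → ℝ) : 0 ≤ x ⬝ᵥ x :=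
  Finset.sum_nonneg fun i _ => mul_self_nonneg _

include hinv in
lemma Bf_orth_zero {x y : Fin ℓ → ℝ} (hx : u ⬝ᵥ x = 0) (hxy : x ⬝ᵥ y = 0) :
    Bf μ v x y = 0 := by
  by_cases hx0 : x = 0
  · rw [hx0]; exact Bf_zero_left μ v y
  have hs : x ⬝ᵥ x ≠ 0 := fun h => hx0 (dotProduct_self_eq_zero.mp h)
  have h1 : reflM x *ᵥ x = -x := reflM_neg x hs
  have h2 : reflM x *ᵥ y = y := reflM_fix x y hxy
  have h3 : reflM x *ᵥ u = u := reflM_fix x u (by rwa [dotProduct_comm])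
  have key := Bf_invariant μ v hinv (reflM_mem x hs) h3 x y
  rw [h1, h2, Bf_neg_left] at key
  linarith

include hinv in
lemma Bf_eq_norm {x y : Fin ℓ → ℝ} (hx : u ⬝ᵥ x = 0) (hy : u ⬝ᵥ y = 0)
    (hnorm : x ⬝ᵥ x = y ⬝ᵥ y) : Bf μ v x x = Bf μ v y y := by
  by_cases hxy : x = y
  · rw [hxy]
  set z := x - y with hz
  have hz0 : z ≠ 0 := sub_ne_zero.mpr hxy
  have hzz : z ⬝ᵥ z ≠ 0 := fun h => hz0 (dotProduct_self_eq_zero.mp h)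
  have hzu : z ⬝ᵥ u = 0 := by
    rw [hz, sub_dotProduct, dotProduct_comm x u, dotProduct_comm y u, hx, hy, sub_zero]
  have hfixu : reflM z *ᵥ u = u := reflM_fix z u hzu
  have hcomm : x ⬝ᵥ y = y ⬝ᵥ x := dotProduct_comm x y
  have hzx : 2 * (z ⬝ᵥ x) = z ⬝ᵥ z := by
    simp only [hz, sub_dotProduct, dotProduct_sub]
    linarith
  have hWx : reflM z *ᵥ x = y := by
    rw [reflM_mulVec, smul_smul]
    have hcoef : 2 / (z ⬝ᵥ z) * (z ⬝ᵥ x) = 1 := by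
      field_simp
      linarith
    rw [hcoef, one_smul, hz, sub_sub_cancel]
  have key := Bf_invariant μ v hinv (reflM_mem z hzz) hfixu x x
  rw [hWx] at key
  exact key.symm

include hsupp hinv in
lemma Bf_exists_c (hu : u ≠ 0) (hℓ : 2 ≤ ℓ) :
    ∃ c : ℝ, ∀ x y : Fin ℓ → ℝ, u ⬝ᵥ x = 0 → u ⬝ᵥ y = 0 →
      Bf μ v x y = c * (x ⬝ᵥ y) := by
  obtain ⟨i, hi⟩ := Function.ne_iff.mp hu
  have hi' : u i ≠ 0 := by simpa using hi
  have : Nontrivial (Fin ℓ) := Fin.nontrivial_iff_two_le.mpr hℓ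
  obtain ⟨j, hj⟩ := exists_ne i
  set z₀ : Fin ℓ → ℝ := u i • (Pi.single j 1 : Fin ℓ → ℝ) - u j • (Pi.single i 1 : Fin ℓ → ℝ) with hz₀def
  have hz₀u : u ⬝ᵥ z₀ = 0 := by
    simp only [hz₀def, dotProduct_sub, dotProduct_smul, dotProduct_single, smul_eq_mul]
    ring
  have hz₀j : z₀ j = u i := by
    simp [hz₀def, Pi.single_apply, hj]
  have hz₀0 : z₀ ≠ 0 := fun h => hi' (by rw [← hz₀j, h]; simp)
  have hz₀z : z₀ ⬝ᵥ z₀ ≠ 0 := fun h => hz₀0 (dotProduct_self_eq_zero.mp h)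
  have hz₀pos : 0 < z₀ ⬝ᵥ z₀ := lt_of_le_of_ne (dot_self_nonneg z₀) (Ne.symm hz₀z)
  refine ⟨Bf μ v z₀ z₀ / (z₀ ⬝ᵥ z₀), ?_⟩
  -- first, the diagonal case
  have hdiag : ∀ x : Fin ℓ → ℝ, u ⬝ᵥ x = 0 →
      Bf μ v x x = Bf μ v z₀ z₀ / (z₀ ⬝ᵥ z₀) * (x ⬝ᵥ x) := by
    intro x hx
    by_cases h0 : x = 0
    · rw [h0, Bf_zero_left μ v, zero_dotProduct, mul_zero]
    set r := Real.sqrt ((x ⬝ᵥ x) / (z₀ ⬝ᵥ z₀)) with hr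
    have hrsq : r * r = (x ⬝ᵥ x) / (z₀ ⬝ᵥ z₀) :=
      Real.mul_self_sqrt (div_nonneg (dot_self_nonneg x) (dot_self_nonneg z₀))
    have hynorm : (r • z₀) ⬝ᵥ (r • z₀) = x ⬝ᵥ x := by
      rw [smul_dotProduct, dotProduct_smul, smul_eq_mul, smul_eq_mul, ← mul_assoc, hrsq]
      field_simp
    have hyu : u ⬝ᵥ (r • z₀) = 0 := by
      rw [dotProduct_smul, hz₀u, smul_zero]
    have e1 : Bf μ v x x = Bf μ v (r • z₀) (r • z₀) :=
      Bf_eq_norm μ v hinv hx hyu (by rw [hynorm])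
    rw [e1, Bf_smul_left μ v, Bf_comm μ v, Bf_smul_left μ v, Bf_comm μ v, ← mul_assoc, hrsq]
    field_simp
  intro x y hx hy
  have hxy : u ⬝ᵥ (x + y) = 0 := by rw [dotProduct_add, hx, hy, add_zero]
  have expand : Bf μ v (x + y) (x + y)
      = Bf μ v x x + Bf μ v y y + 2 * Bf μ v x y := by
    rw [Bf_add_left μ v hsupp, Bf_comm μ v x (x + y), Bf_comm μ v y (x + y),
      Bf_add_left μ v hsupp, Bf_add_left μ v hsupp, Bf_comm μ v y x]
    ring
  have hq1 := hdiag (x + y) hxy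
  have hq2 := hdiag x hx
  have hq3 := hdiag y hy
  have hdot : (x + y) ⬝ᵥ (x + y) = x ⬝ᵥ x + 2 * (x ⬝ᵥ y) + y ⬝ᵥ y := by
    rw [dotProduct_add, add_dotProduct, add_dotProduct, dotProduct_comm y x]
    ring
  rw [expand, hdot] at hq1
  rw [hq2, hq3] at hq1
  linarith

include hsupp in
lemma Bf_trace : ∑ k, Bf μ v (Pi.single k 1) (Pi.single k 1) = v ⬝ᵥ v := by
  unfold Bf
  rw [← integral_finset_sum _ (fun k _ => integrable_f μ v hsupp _ _)]
  have hae : ∀ᵐ O ∂μ, (∑ k, (Pi.single k (1:ℝ) ⬝ᵥ O *ᵥ v) * (Pi.single k 1 ⬝ᵥ O *ᵥ v))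
      = v ⬝ᵥ v := by
    filter_upwards [ae_norm μ (v := v) hsupp] with O hO
    simp only [single_dotProduct, one_mul]
    rw [← hO]
    rfl
  rw [integral_congr_ae hae, integral_const]
  simp

include hsupp in
lemma Bf_u_u (hv : u ⬝ᵥ v = 1) : Bf μ v u u = 1 := by
  unfold Bf
  have hae : ∀ᵐ O ∂μ, (u ⬝ᵥ O *ᵥ v) * (u ⬝ᵥ O *ᵥ v) = 1 := by
    filter_upwards [ae_dot_u μ v hsupp] with O hO
    rw [hO, hv, mul_one]
  rw [integral_congr_ae hae, integral_const]
  simp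

end Claims

/-- The Haar (i.e. invariant probability) average of `(Ov)(Ov)ᵀ`, over orthogonal
maps `O` fixing `u`, applied to a vector `v` on the boundary sphere of the state
space, equals `(1/|u|²)((1/(ℓ-1)) I + ((ℓ-2)/(ℓ-1)) û ûᵀ)` (entrywise). -/
theorem haar_average_outer_product
    (ℓ : ℕ) (hℓ : 2 ≤ ℓ) (u : Fin ℓ → ℝ) (hu : u ≠ 0)
    (μ : Measure (Matrix (Fin ℓ) (Fin ℓ) ℝ)) [IsProbabilityMeasure μ]
    (hsupp : μ {O | ¬ (O ∈ Matrix.orthogonalGroup (Fin ℓ) ℝ ∧ O.mulVec u = u)} = 0)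
    (hinv : ∀ O₀ ∈ Matrix.orthogonalGroup (Fin ℓ) ℝ, O₀.mulVec u = u →
      Measure.map (fun O => O₀ * O) μ = μ)
    (v : Fin ℓ → ℝ) (hv : u ⬝ᵥ v = 1) (hbd : v ⬝ᵥ v = 2 / (u ⬝ᵥ u)) :
    ∀ i j, (∫ O, (Matrix.mulVec O v i) * (Matrix.mulVec O v j) ∂μ)
      = ((1 / (u ⬝ᵥ u)) •
          ((1 / ((ℓ : ℝ) - 1)) • (1 : Matrix (Fin ℓ) (Fin ℓ) ℝ)
            + (((ℓ : ℝ) - 2) / ((ℓ : ℝ) - 1)) •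
              vecMulVec ((Real.sqrt (u ⬝ᵥ u))⁻¹ • u) ((Real.sqrt (u ⬝ᵥ u))⁻¹ • u))) i j := by
  intro i j
  have hs0 : u ⬝ᵥ u ≠ 0 := fun h => hu (dotProduct_self_eq_zero.mp h)
  set s := u ⬝ᵥ u with hsdef
  have hsnn : 0 ≤ s := dot_self_nonneg u
  have hq : Real.sqrt s * Real.sqrt s = s := Real.mul_self_sqrt hsnn
  have hq0 : Real.sqrt s ≠ 0 := fun h => hs0 (by rw [← hq, h, mul_zero])
  have hl2 : (2:ℝ) ≤ (ℓ:ℝ) := by exact_mod_cast hℓ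
  have hl1 : ((ℓ:ℝ) - 1) ≠ 0 := by linarith
  obtain ⟨c, hc⟩ := Bf_exists_c μ v hsupp hinv hu hℓ
  -- bilinearity on the right
  have Bf_add_right : ∀ x y y' : Fin ℓ → ℝ,
      Bf μ v x (y + y') = Bf μ v x y + Bf μ v x y' := by
    intro x y y'
    rw [Bf_comm μ v, Bf_add_left μ v hsupp, Bf_comm μ v y x, Bf_comm μ v y' x]
  have Bf_smul_right : ∀ (a : ℝ) (x y : Fin ℓ → ℝ),
      Bf μ v x (a • y) = a * Bf μ v x y := by
    intro a x y
    rw [Bf_comm μ v, Bf_smul_left μ v, Bf_comm μ v y x]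
  -- the orthogonal projections of the basis vectors
  set p : Fin ℓ → (Fin ℓ → ℝ) := fun k => (Pi.single k 1 : Fin ℓ → ℝ) - (u k / s) • u
    with hpdef
  have hpu : ∀ k, u ⬝ᵥ p k = 0 := by
    intro k
    simp only [hpdef, dotProduct_sub, dotProduct_smul, dotProduct_single, smul_eq_mul,
      mul_one, ← hsdef]
    field_simp
    ring
  have hdecomp : ∀ k, (Pi.single k 1 : Fin ℓ → ℝ) = (u k / s) • u + p k := by
    intro k
    rw [hpdef]
    simp
  have hps : ∀ k m, p k ⬝ᵥ p m = (if k = m then 1 else 0) - u k * u m / s := by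
    intro k m
    rcases eq_or_ne k m with rfl | hkm
    · simp only [hpdef, sub_dotProduct, dotProduct_sub, smul_dotProduct, dotProduct_smul,
        single_dotProduct, dotProduct_single, smul_eq_mul, mul_one, one_mul, if_pos rfl, Pi.sub_apply, Pi.smul_apply,
        ← hsdef, Pi.single_eq_same]
      field_simp
      simp
    · simp only [hpdef, sub_dotProduct, dotProduct_sub, smul_dotProduct, dotProduct_smul,
        single_dotProduct, dotProduct_single, smul_eq_mul, mul_one, one_mul, if_neg hkm, Pi.sub_apply, Pi.smul_apply,
        ← hsdef, Pi.single_eq_of_ne hkm]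
      field_simp
      simp [Pi.single_apply, hkm, hkm.symm]
  have hBuu : Bf μ v u u = 1 := Bf_u_u μ v hsupp hv
  have hBpu : ∀ k, Bf μ v (p k) u = 0 := fun k =>
    Bf_orth_zero μ v hinv (hpu k) (by rw [dotProduct_comm]; exact hpu k)
  have hBup : ∀ k, Bf μ v u (p k) = 0 := fun k => by
    rw [Bf_comm μ v]; exact hBpu k
  have hBe : ∀ k m, Bf μ v (Pi.single k 1) (Pi.single m 1)
      = (u k / s) * (u m / s) + c * (p k ⬝ᵥ p m) := by
    intro k m
    rw [hdecomp k, hdecomp m, Bf_add_left μ v hsupp, Bf_add_right, Bf_add_right,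
      Bf_smul_left μ v, Bf_smul_left μ v, Bf_smul_right, Bf_smul_right,
      hBuu, hBup m, hBpu k, hc _ _ (hpu k) (hpu m)]
    ring
  -- the trace identity determines c
  have htr := Bf_trace μ v hsupp
  rw [hbd] at htr
  have hsum : ∑ k, Bf μ v (Pi.single k 1) (Pi.single k 1)
      = 1 / s + c * ((ℓ:ℝ) - 1) := by
    have heach : ∀ k, Bf μ v (Pi.single k 1) (Pi.single k 1)
        = u k * u k / (s * s) + c * (1 - u k * u k / s) := by
      intro k
      rw [hBe k k, hps k k, if_pos rfl]
      ring
    rw [Finset.sum_congr rfl (fun k _ => heach k), Finset.sum_add_distrib]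
    have hus : ∑ k, u k * u k = s := rfl
    have h1 : ∑ k, u k * u k / (s * s) = 1 / s := by
      rw [← Finset.sum_div, hus]
      field_simp
    have h2 : ∑ k, c * (1 - u k * u k / s) = c * ((ℓ:ℝ) - 1) := by
      rw [← Finset.mul_sum]
      congr 1
      rw [Finset.sum_sub_distrib, ← Finset.sum_div, hus, Finset.sum_const,
        Finset.card_univ, Fintype.card_fin]
      field_simp
      simp
    rw [h1, h2]
  rw [hsum] at htr
  have hcval : c = 1 / (s * ((ℓ:ℝ) - 1)) := by
    have h3 : c * ((ℓ:ℝ) - 1) = 1 / s := by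
      field_simp at htr ⊢
      linarith
    rw [eq_div_iff (mul_ne_zero hs0 hl1)]
    calc c * (s * ((ℓ:ℝ) - 1)) = (c * ((ℓ:ℝ) - 1)) * s := by ring
    _ = (1 / s) * s := by rw [h3]
    _ = 1 := by field_simp
  -- identify the integral with Bf
  have hM : (∫ O, (Matrix.mulVec O v i) * (Matrix.mulVec O v j) ∂μ)
      = Bf μ v (Pi.single i 1) (Pi.single j 1) := by
    unfold Bf
    refine integral_congr_ae (Filter.Eventually.of_forall fun O => ?_)
    simp [single_dotProduct]
  rw [hM, hBe i j, hps i j, hcval]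
  simp only [Matrix.smul_apply, Matrix.add_apply, Matrix.one_apply, vecMulVec_apply,
    Pi.smul_apply, smul_eq_mul]
  have hinv2 : (Real.sqrt s)⁻¹ * (Real.sqrt s)⁻¹ = s⁻¹ := by rw [← mul_inv, hq]
  have hss : ((Real.sqrt s)⁻¹ * u i) * ((Real.sqrt s)⁻¹ * u j) = u i * u j / s := by
    calc ((Real.sqrt s)⁻¹ * u i) * ((Real.sqrt s)⁻¹ * u j)
        = ((Real.sqrt s)⁻¹ * (Real.sqrt s)⁻¹) * (u i * u j) := by ring
    _ = s⁻¹ * (u i * u j) := by rw [hinv2]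
    _ = u i * u j / s := by ring
  by_cases hij : i = j
  · rw [hss]
    simp only [if_pos hij]
    field_simp
    ring
  · rw [hss]
    simp only [if_neg hij]
    field_simp
    ring
end

section
/- Commutativity of data-driven inference with injective relabelings: let X ⊆ ℝ^ℓ, 𝒳 ⊆ ℝ^n, and L a linear map with L⁺L 𝒳 = 𝒳 (L acts injectively on span 𝒳). Then the set of constraint-satisfying maps transforms covariantly: L ∘ {M : 𝒳 ⊆ MX ⊆ span 𝒳} = {M' : L𝒳 ⊆ M'X ⊆ span L𝒳} ∩ {M' : supp M' ⊆ range L}, where L⁺ is the Moore–Penrose pseudoinverse. -/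
open Matrix

/-- `P` is the Moore–Penrose pseudoinverse of `L`. -/
def IsMoorePenroseInv {m n : ℕ} (L : Matrix (Fin m) (Fin n) ℝ)
    (P : Matrix (Fin n) (Fin m) ℝ) : Prop :=
  L * P * L = L ∧ P * L * P = P ∧ (L * P)ᵀ = L * P ∧ (P * L)ᵀ = P * L

/-- Matrices equal if their `mulVec` actions agree. -/
lemma matrix_eq_of_mulVec_eq {m n : ℕ} (A B : Matrix (Fin m) (Fin n) ℝ)
    (h : ∀ v, A.mulVec v = B.mulVec v) : A = B := by
  ext i j
  have := congrFun (h (Pi.single j 1)) i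
  simpa [Matrix.mulVec_single_one] using this

/-- Commutativity of the consistency constraints with injective relabelings:
if `L⁺L` fixes `𝒳`, then `L ∘ ℒ(𝒳|X)` equals the set of maps `M'` satisfying
the relabeled constraints `L𝒳 ⊆ M'X ⊆ span(L𝒳)` and whose range lies in the
range of `L`. -/
theorem ddi_commutativity
    (ℓ n m : ℕ) (Xset : Set (Fin ℓ → ℝ)) (calX : Set (Fin n → ℝ))
    (L : Matrix (Fin m) (Fin n) ℝ) (P : Matrix (Fin n) (Fin m) ℝ)
    (hP : IsMoorePenroseInv L P)
    (hfix : ∀ x ∈ calX, (P * L).mulVec x = x) :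
    (fun M : Matrix (Fin n) (Fin ℓ) ℝ => L * M) ''
        {M | calX ⊆ M.mulVec '' Xset
          ∧ M.mulVec '' Xset ⊆ (Submodule.span ℝ calX : Set (Fin n → ℝ))}
      = {M' : Matrix (Fin m) (Fin ℓ) ℝ |
          (L.mulVec '' calX ⊆ M'.mulVec '' Xset
            ∧ M'.mulVec '' Xset
              ⊆ (Submodule.span ℝ (L.mulVec '' calX) : Set (Fin m → ℝ)))
          ∧ ∀ w, M'.mulVec w ∈ LinearMap.range L.mulVecLin} := by
  obtain ⟨h1, h2, h3, h4⟩ := hP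
  ext M'
  constructor
  · rintro ⟨M, ⟨hXsub, hspan⟩, rfl⟩
    refine ⟨⟨?_, ?_⟩, ?_⟩
    · rintro _ ⟨x, hx, rfl⟩
      obtain ⟨w, hw, hwx⟩ := hXsub hx
      exact ⟨w, hw, by rw [← Matrix.mulVec_mulVec, hwx]⟩
    · rintro _ ⟨w, hw, rfl⟩
      rw [← Matrix.mulVec_mulVec]
      have hm : M.mulVec w ∈ Submodule.span ℝ calX := hspan ⟨w, hw, rfl⟩
      have : L.mulVec (M.mulVec w)
          ∈ (Submodule.span ℝ calX).map L.mulVecLin :=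
        Submodule.mem_map_of_mem hm
      rw [Submodule.map_span] at this
      exact this
    · intro w
      rw [← Matrix.mulVec_mulVec]
      exact ⟨M.mulVec w, rfl⟩
  · rintro ⟨⟨hXsub, hspan⟩, hrange⟩
    have hLPM : L * (P * M') = M' := by
      apply matrix_eq_of_mulVec_eq
      intro v
      obtain ⟨u, hu⟩ := hrange v
      simp only [Matrix.mulVecLin_apply] at hu
      rw [← Matrix.mulVec_mulVec, ← Matrix.mulVec_mulVec, ← hu,
        Matrix.mulVec_mulVec, Matrix.mulVec_mulVec, h1]
    refine ⟨P * M', ⟨?_, ?_⟩, hLPM⟩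
    · intro x hx
      obtain ⟨w, hw, hwx⟩ := hXsub ⟨x, hx, rfl⟩
      refine ⟨w, hw, ?_⟩
      rw [← Matrix.mulVec_mulVec, hwx, Matrix.mulVec_mulVec, hfix x hx]
    · rintro _ ⟨w, hw, rfl⟩
      have hm : M'.mulVec w ∈ Submodule.span ℝ (L.mulVec '' calX) :=
        hspan ⟨w, hw, rfl⟩
      have : (P * M').mulVec w
          ∈ (Submodule.span ℝ (L.mulVec '' calX)).map P.mulVecLin := by
        rw [← Matrix.mulVec_mulVec]
        exact Submodule.mem_map_of_mem hm
      rw [Submodule.map_span] at this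
      have himg : P.mulVecLin '' (L.mulVec '' calX) = calX := by
        ext y
        constructor
        · rintro ⟨_, ⟨x, hx, rfl⟩, rfl⟩
          simpa [Matrix.mulVecLin_apply, Matrix.mulVec_mulVec, hfix x hx]
            using hx
        · intro hy
          exact ⟨L.mulVec y, ⟨y, hy, rfl⟩, by
            simp [Matrix.mulVecLin_apply, Matrix.mulVec_mulVec, hfix y hy]⟩
      rw [himg] at this
      exact this
end
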